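/- arXiv:math/0510313 — 2 statements merged into one kernel-verified Lean document; each statement's English description precedes it below -/
import Mathlib

section
/- Let ω and η be smooth 1-forms on a Riemannian manifold (M,g). Then the codifferential of their wedge product satisfies d*(ω∧η) = (d*ω)·η − (d*η)·ω − [ω♯, η♯]♭, where ♯ and ♭ denote the musical isomorphisms and [·,·] is the Lie bracket of vector fields. -/
open scoped BigOperators

noncomputable section

/-- Partial derivative of `f` in the `i`-th coordinate direction. -/
def pd {n : ℕ} (f : (Fin n → ℝ) → ℝ) (i : Fin n) (x : Fin n → ℝ) : ℝ :=
  fderiv ℝ f x (Pi.single i 1)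

/-- Pointwise inverse of a metric (the components `g^{ij}`). -/
def ginv {n : ℕ} (g : (Fin n → ℝ) → Matrix (Fin n) (Fin n) ℝ) (x : Fin n → ℝ) :
    Matrix (Fin n) (Fin n) ℝ := (g x)⁻¹

/-- A smooth Riemannian metric in coordinates on `ℝⁿ`. -/
def IsMetric {n : ℕ} (g : (Fin n → ℝ) → Matrix (Fin n) (Fin n) ℝ) : Prop :=
  (∀ i j, ContDiff ℝ (⊤ : ℕ∞) fun x => g x i j) ∧ ∀ x, (g x).IsSymm ∧ (g x).PosDef

/-- The Riemannian volume density `√(det g)`. -/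
def vdens {n : ℕ} (g : (Fin n → ℝ) → Matrix (Fin n) (Fin n) ℝ) (x : Fin n → ℝ) : ℝ :=
  Real.sqrt (g x).det

/-- The codifferential `d*ω = -(1/√g) ∂_i (√g g^{ij} ω_j)` of a 1-form. -/
def codiff1 {n : ℕ} (g : (Fin n → ℝ) → Matrix (Fin n) (Fin n) ℝ)
    (ω : (Fin n → ℝ) → Fin n → ℝ) (x : Fin n → ℝ) : ℝ :=
  -(1 / vdens g x) * ∑ i, pd (fun y => vdens g y * ∑ j, ginv g y i j * ω y j) i x

/-- Components with raised indices `(ω∧η)^{ik}` of the wedge product of two 1-forms. -/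
def wedgeUp {n : ℕ} (g : (Fin n → ℝ) → Matrix (Fin n) (Fin n) ℝ)
    (ω η : (Fin n → ℝ) → Fin n → ℝ) (i k : Fin n) (x : Fin n → ℝ) : ℝ :=
  ∑ a, ∑ b, ginv g x i a * ginv g x k b * (ω x a * η x b - ω x b * η x a)

/-- The codifferential `(d*Ω)_j = -g_{jk} (1/√g) ∂_i (√g Ω^{ik})` of the 2-form `ω∧η`. -/
def codiff2wedge {n : ℕ} (g : (Fin n → ℝ) → Matrix (Fin n) (Fin n) ℝ)
    (ω η : (Fin n → ℝ) → Fin n → ℝ) (j : Fin n) (x : Fin n → ℝ) : ℝ :=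
  -(1 / vdens g x) *
    ∑ k, g x j k * ∑ i, pd (fun y => vdens g y * wedgeUp g ω η i k y) i x

/-- The musical isomorphism `♯` applied to a 1-form. -/
def sharp {n : ℕ} (g : (Fin n → ℝ) → Matrix (Fin n) (Fin n) ℝ)
    (ω : (Fin n → ℝ) → Fin n → ℝ) (x : Fin n → ℝ) (k : Fin n) : ℝ :=
  ∑ j, ginv g x k j * ω x j

/-- The Lie bracket of vector fields, `[X,Y]^k = X^i ∂_i Y^k - Y^i ∂_i X^k`. -/
def bracket {n : ℕ} (X Y : (Fin n → ℝ) → Fin n → ℝ) (x : Fin n → ℝ) (k : Fin n) : ℝ :=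
  ∑ i, (X x i * pd (fun y => Y y k) i x - Y x i * pd (fun y => X y k) i x)

/-- The musical isomorphism `♭` applied to a vector field: `(X♭)_j = g_{jk} X^k`. -/
def flat {n : ℕ} (g : (Fin n → ℝ) → Matrix (Fin n) (Fin n) ℝ)
    (X : (Fin n → ℝ) → Fin n → ℝ) (j : Fin n) (x : Fin n → ℝ) : ℝ :=
  ∑ k, g x j k * X x k


section Aux
variable {n : ℕ}

lemma pd_mul {f h : (Fin n → ℝ) → ℝ} {x : Fin n → ℝ} (i : Fin n)
    (hf : DifferentiableAt ℝ f x) (hh : DifferentiableAt ℝ h x) :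
    pd (fun y => f y * h y) i x = pd f i x * h x + f x * pd h i x := by
  simp only [pd, fderiv_fun_mul hf hh, ContinuousLinearMap.add_apply,
    ContinuousLinearMap.smul_apply, smul_eq_mul]
  ring

lemma pd_sub {f h : (Fin n → ℝ) → ℝ} {x : Fin n → ℝ} (i : Fin n)
    (hf : DifferentiableAt ℝ f x) (hh : DifferentiableAt ℝ h x) :
    pd (fun y => f y - h y) i x = pd f i x - pd h i x := by
  simp [pd, fderiv_fun_sub hf hh]

lemma contDiff_det' {A : (Fin n → ℝ) → Matrix (Fin n) (Fin n) ℝ}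
    (hA : ∀ i j, ContDiff ℝ (⊤ : ℕ∞) fun y => A y i j) :
    ContDiff ℝ (⊤ : ℕ∞) fun y => (A y).det := by
  have h : (fun y => (A y).det)
      = fun y => ∑ σ : Equiv.Perm (Fin n),
          (Equiv.Perm.sign σ : ℝ) * ∏ i, A y (σ i) i := by
    funext y
    rw [Matrix.det_apply']
  rw [h]
  apply ContDiff.sum
  intro σ _
  exact contDiff_const.mul (contDiff_prod fun i _ => hA (σ i) i)

end Aux

/-- For smooth 1-forms `ω, η` on a Riemannian manifold `(M,g)`,
`d*(ω∧η) = (d*ω)·η − (d*η)·ω − [ω♯, η♯]♭`. -/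
theorem codiff_wedge_of_one_forms {n : ℕ}
    (g : (Fin n → ℝ) → Matrix (Fin n) (Fin n) ℝ) (hg : IsMetric g)
    (ω η : (Fin n → ℝ) → Fin n → ℝ)
    (hω : ∀ j, ContDiff ℝ (⊤ : ℕ∞) fun x => ω x j)
    (hη : ∀ j, ContDiff ℝ (⊤ : ℕ∞) fun x => η x j) :
    ∀ (x : Fin n → ℝ) (j : Fin n),
      codiff2wedge g ω η j x =
        codiff1 g ω x * η x j - codiff1 g η x * ω x j
          - flat g (bracket (sharp g ω) (sharp g η)) j x := by

  obtain ⟨hgC, hgpt⟩ := hg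
  have hdet : ContDiff ℝ (⊤ : ℕ∞) fun y => (g y).det := contDiff_det' hgC
  have hdetpos : ∀ y, 0 < (g y).det := fun y => (hgpt y).2.det_pos
  have hdetne : ∀ y, (g y).det ≠ 0 := fun y => (hdetpos y).ne'
  have hadj : ∀ i k, ContDiff ℝ (⊤ : ℕ∞) fun y => (g y).adjugate i k := by
    intro i k
    have h : (fun y => (g y).adjugate i k)
        = fun y => ((g y).updateRow k (Pi.single i 1)).det := by
      funext y; rw [Matrix.adjugate_apply]
    rw [h]
    apply contDiff_det'
    intro a b
    rcases eq_or_ne a k with h' | h'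
    · simp only [Matrix.updateRow_apply, if_pos h']
      exact contDiff_const
    · simp only [Matrix.updateRow_apply, if_neg h']
      exact hgC a b
  have hGinv : ∀ i k, ContDiff ℝ (⊤ : ℕ∞) fun y => ginv g y i k := by
    intro i k
    have h : (fun y => ginv g y i k)
        = fun y => ((g y).det)⁻¹ * (g y).adjugate i k := by
      funext y
      rw [ginv, Matrix.inv_def, Matrix.smul_apply, smul_eq_mul, Ring.inverse_eq_inv]
    rw [h]
    exact (hdet.inv hdetne).mul (hadj i k)
  intro x j
  have hvd : DifferentiableAt ℝ (vdens g) x :=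
    DifferentiableAt.sqrt (hdet.differentiable (by simp) x) (hdetne x)
  have hvne : vdens g x ≠ 0 := (Real.sqrt_pos.2 (hdetpos x)).ne'
  have hXd : ∀ (θ : (Fin n → ℝ) → Fin n → ℝ),
      (∀ j, ContDiff ℝ (⊤ : ℕ∞) fun y => θ y j) →
      ∀ k, DifferentiableAt ℝ (fun y => sharp g θ y k) x := by
    intro θ hθ k
    simp only [sharp]
    apply DifferentiableAt.fun_sum
    intro l _
    exact ((hGinv k l).differentiable (by simp) x).mul ((hθ l).differentiable (by simp) x)
  have hXω := hXd ω hω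
  have hXη := hXd η hη
  have hwedge : ∀ (i k : Fin n) (y : Fin n → ℝ),
      wedgeUp g ω η i k y
        = sharp g ω y i * sharp g η y k - sharp g ω y k * sharp g η y i := by
    intro i k y
    simp only [wedgeUp, sharp]
    rw [Finset.sum_mul_sum, Finset.sum_mul_sum]
    rw [Finset.sum_comm (f := fun b a => (ginv g y k b * ω y b) * (ginv g y i a * η y a))]
    rw [← Finset.sum_sub_distrib]
    refine Finset.sum_congr rfl fun a _ => ?_
    rw [← Finset.sum_sub_distrib]
    exact Finset.sum_congr rfl fun b _ => by ring
  have hginvsum : ∀ (θ : (Fin n → ℝ) → Fin n → ℝ),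
      ∑ k, g x j k * sharp g θ x k = θ x j := by
    intro θ
    simp only [sharp, Finset.mul_sum]
    rw [Finset.sum_comm]
    have h1 : ∀ l, ∑ k, g x j k * (ginv g x k l * θ x l)
        = (g x * (g x)⁻¹) j l * θ x l := by
      intro l
      rw [Matrix.mul_apply, Finset.sum_mul]
      exact Finset.sum_congr rfl fun k _ => by rw [ginv]; ring
    rw [Finset.sum_congr rfl fun l _ => h1 l,
      Matrix.mul_nonsing_inv _ (isUnit_iff_ne_zero.2 (hdetne x))]
    simp [Matrix.one_apply]
  have hDω : codiff1 g ω x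
      = -(1 / vdens g x) * ∑ i, pd (fun y => vdens g y * sharp g ω y i) i x := rfl
  have hDη : codiff1 g η x
      = -(1 / vdens g x) * ∑ i, pd (fun y => vdens g y * sharp g η y i) i x := rfl
  have hinner : ∀ k : Fin n,
      (∑ i, pd (fun y => vdens g y * wedgeUp g ω η i k y) i x)
        = (∑ i, pd (fun y => vdens g y * sharp g ω y i) i x) * sharp g η x k
          - (∑ i, pd (fun y => vdens g y * sharp g η y i) i x) * sharp g ω x k
          + vdens g x * bracket (sharp g ω) (sharp g η) x k := by
    intro k
    have h1 : ∀ i, pd (fun y => vdens g y * wedgeUp g ω η i k y) i x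
        = pd (fun y => vdens g y * sharp g ω y i) i x * sharp g η x k
          + (vdens g x * sharp g ω x i) * pd (fun y => sharp g η y k) i x
          - (pd (fun y => vdens g y * sharp g η y i) i x * sharp g ω x k
          + (vdens g x * sharp g η x i) * pd (fun y => sharp g ω y k) i x) := by
      intro i
      have e : (fun y => vdens g y * wedgeUp g ω η i k y)
          = fun y => (vdens g y * sharp g ω y i) * sharp g η y k
              - (vdens g y * sharp g η y i) * sharp g ω y k := by
        funext y; rw [hwedge]; ring
      rw [e, pd_sub i ((hvd.fun_mul (hXω i)).fun_mul (hXη k)) ((hvd.fun_mul (hXη i)).fun_mul (hXω k)),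
        pd_mul i (hvd.fun_mul (hXω i)) (hXη k), pd_mul i (hvd.fun_mul (hXη i)) (hXω k)]
    rw [Finset.sum_congr rfl fun i _ => h1 i]
    rw [Finset.sum_sub_distrib, Finset.sum_add_distrib, Finset.sum_add_distrib,
      ← Finset.sum_mul, ← Finset.sum_mul]
    have hA : ∑ i, (vdens g x * sharp g ω x i) * pd (fun y => sharp g η y k) i x
        = vdens g x * ∑ i, sharp g ω x i * pd (fun y => sharp g η y k) i x := by
      rw [Finset.mul_sum]; exact Finset.sum_congr rfl fun i _ => by ring
    have hB : ∑ i, (vdens g x * sharp g η x i) * pd (fun y => sharp g ω y k) i x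
        = vdens g x * ∑ i, sharp g η x i * pd (fun y => sharp g ω y k) i x := by
      rw [Finset.mul_sum]; exact Finset.sum_congr rfl fun i _ => by ring
    rw [hA, hB]
    simp only [bracket]
    rw [Finset.sum_sub_distrib, mul_sub]
    ring
  have hflat : ∑ k, g x j k * bracket (sharp g ω) (sharp g η) x k
      = flat g (bracket (sharp g ω) (sharp g η)) j x := rfl
  simp only [codiff2wedge]
  rw [Finset.sum_congr rfl fun k _ => by rw [hinner k]]
  have hsplit : ∑ k, g x j k *
        ((∑ i, pd (fun y => vdens g y * sharp g ω y i) i x) * sharp g η x k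
          - (∑ i, pd (fun y => vdens g y * sharp g η y i) i x) * sharp g ω x k
          + vdens g x * bracket (sharp g ω) (sharp g η) x k)
      = (∑ i, pd (fun y => vdens g y * sharp g ω y i) i x)
            * (∑ k, g x j k * sharp g η x k)
        - (∑ i, pd (fun y => vdens g y * sharp g η y i) i x)
            * (∑ k, g x j k * sharp g ω x k)
        + vdens g x * (∑ k, g x j k * bracket (sharp g ω) (sharp g η) x k) := by
    rw [Finset.mul_sum, Finset.mul_sum, Finset.mul_sum,
      ← Finset.sum_sub_distrib, ← Finset.sum_add_distrib]
    exact Finset.sum_congr rfl fun k _ => by ring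
  rw [hsplit, hginvsum η, hginvsum ω, hflat, hDω, hDη]
  field_simp
  ring
end
end

section
/- For the warped product ansatz with λ non-vanishing and λ' ≠ 0, the pair of ODEs 0 = λ²K^N + (ln λ)'' − 2((ln λ)')² − f(ln λ)' + A and 0 = f' + 2(ln λ)'' − 2((ln λ)')² + A is equivalent to: f = (λ'' + Aλ + K^N λ³)/λ' − 3λ'/λ together with the third-order ODE λ'''λ'λ² − λλ''(λ'² + λλ'') + Aλ²(2λ'² − λλ'') + K^N λ⁴(3λ'² − λλ'') − λ'⁴ = 0. -/
open Real Filter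


/-- For the warped product ansatz with `λ > 0` and `λ' ≠ 0` on an open
interval, the pair of ODEs
`0 = λ²K^N + (ln λ)'' − 2((ln λ)')² − f(ln λ)' + A` and
`0 = f' + 2(ln λ)'' − 2((ln λ)')² + A`
is equivalent to `f = (λ'' + Aλ + K^N λ³)/λ' − 3λ'/λ` together with the third-order ODE
`λ'''λ'λ² − λλ''(λ'² + λλ'') + Aλ²(2λ'² − λλ'') + K^Nλ⁴(3λ'² − λλ'') − λ'⁴ = 0`. -/
theorem warped_product_soliton_odes_equivalence
    (K A : ℝ) (lam f : ℝ → ℝ) (I : Set ℝ) (hI : IsOpen I) (hI' : I.OrdConnected)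
    (hlam : ContDiff ℝ (⊤ : ℕ∞) lam) (hf : ContDiff ℝ (⊤ : ℕ∞) f)
    (hpos : ∀ t ∈ I, 0 < lam t) (hne : ∀ t ∈ I, deriv lam t ≠ 0) :
    (∀ t ∈ I,
      lam t ^ 2 * K + deriv (deriv (fun s => Real.log (lam s))) t
          - 2 * (deriv (fun s => Real.log (lam s)) t) ^ 2
          - f t * deriv (fun s => Real.log (lam s)) t + A = 0 ∧
      deriv f t + 2 * deriv (deriv (fun s => Real.log (lam s))) t
          - 2 * (deriv (fun s => Real.log (lam s)) t) ^ 2 + A = 0)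
    ↔
    (∀ t ∈ I,
      f t = (deriv (deriv lam) t + A * lam t + K * lam t ^ 3) / deriv lam t
          - 3 * deriv lam t / lam t ∧
      deriv (deriv (deriv lam)) t * deriv lam t * lam t ^ 2
          - lam t * deriv (deriv lam) t *
              ((deriv lam t) ^ 2 + lam t * deriv (deriv lam) t)
          + A * lam t ^ 2 * (2 * (deriv lam t) ^ 2 - lam t * deriv (deriv lam) t)
          + K * lam t ^ 4 * (3 * (deriv lam t) ^ 2 - lam t * deriv (deriv lam) t)
          - (deriv lam t) ^ 4 = 0) := by
  have hdl : ContDiff ℝ (⊤:ℕ∞) (deriv lam) := (contDiff_infty_iff_deriv.mp hlam).2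
  have hddl : ContDiff ℝ (⊤:ℕ∞) (deriv (deriv lam)) := (contDiff_infty_iff_deriv.mp hdl).2
  have h0 : ∀ t, HasDerivAt lam (deriv lam t) t := fun t => (hlam.differentiable (by simp) t).hasDerivAt
  have h1 : ∀ t, HasDerivAt (deriv lam) (deriv (deriv lam) t) t := fun t => (hdl.differentiable (by simp) t).hasDerivAt
  have h2 : ∀ t, HasDerivAt (deriv (deriv lam)) (deriv (deriv (deriv lam)) t) t := fun t => (hddl.differentiable (by simp) t).hasDerivAt
  have hlog1' : ∀ t, 0 < lam t → deriv (fun s => Real.log (lam s)) t = deriv lam t / lam t := by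
    intro t ht
    exact ((h0 t).log ht.ne').deriv
  have hlog2 : ∀ t ∈ I, deriv (deriv (fun s => Real.log (lam s))) t
      = (deriv (deriv lam) t * lam t - deriv lam t ^ 2) / lam t ^ 2 := by
    intro t ht
    have hU : IsOpen (lam ⁻¹' Set.Ioi 0) := (hlam.continuous).isOpen_preimage _ isOpen_Ioi
    have hev : deriv (fun s => Real.log (lam s)) =ᶠ[nhds t] fun s => deriv lam s / lam s :=
      eventually_of_mem (hU.mem_nhds (hpos t ht)) (fun s hs => hlog1' s hs)
    rw [hev.deriv_eq]
    have := ((h1 t).div (h0 t) (hpos t ht).ne').deriv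
    rw [show (fun s => deriv lam s / lam s) = deriv lam / lam from rfl, this]
    ring_nf
  -- derivative of the expression F along f when f = F on I
  have hdf : ∀ t ∈ I, (∀ s ∈ I, f s = (deriv (deriv lam) s + A * lam s + K * lam s ^ 3) / deriv lam s
          - 3 * deriv lam s / lam s) →
      deriv f t = ((deriv (deriv (deriv lam)) t + A * deriv lam t + 3 * K * lam t ^ 2 * deriv lam t) * deriv lam t
            - (deriv (deriv lam) t + A * lam t + K * lam t ^ 3) * deriv (deriv lam) t) / deriv lam t ^ 2
          - (3 * deriv (deriv lam) t * lam t - 3 * deriv lam t ^ 2) / lam t ^ 2 := by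
    intro t ht hfF
    have hevf : f =ᶠ[nhds t] (fun s => (deriv (deriv lam) s + A * lam s + K * lam s ^ 3) / deriv lam s
          - 3 * deriv lam s / lam s) :=
      eventually_of_mem (hI.mem_nhds ht) hfF
    rw [hevf.deriv_eq]
    have ha := (hpos t ht).ne'
    have hb := hne t ht
    have hF : HasDerivAt (fun s => (deriv (deriv lam) s + A * lam s + K * lam s ^ 3) / deriv lam s
          - 3 * deriv lam s / lam s)
        (((deriv (deriv (deriv lam)) t + A * deriv lam t + 3 * K * lam t ^ 2 * deriv lam t) * deriv lam t
            - (deriv (deriv lam) t + A * lam t + K * lam t ^ 3) * deriv (deriv lam) t) / deriv lam t ^ 2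
          - (3 * deriv (deriv lam) t * lam t - 3 * deriv lam t ^ 2) / lam t ^ 2) t := by
      have hnum : HasDerivAt (fun s => deriv (deriv lam) s + A * lam s + K * lam s ^ 3)
          (deriv (deriv (deriv lam)) t + A * deriv lam t + 3 * K * lam t ^ 2 * deriv lam t) t := by
        have := ((h2 t).add ((h0 t).const_mul A)).add (((h0 t).pow 3).const_mul K)
        exact this.congr_deriv (by push_cast; ring)
      have hq := hnum.div (h1 t) hb
      have hq2 := ((h1 t).const_mul 3).div (h0 t) ha
      have := hq.sub hq2
      exact this.congr_deriv (by ring)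
    exact hF.deriv
  constructor
  · intro H t ht
    have ha := (hpos t ht).ne'
    have hb := hne t ht
    have hfF : ∀ s ∈ I, f s = (deriv (deriv lam) s + A * lam s + K * lam s ^ 3) / deriv lam s
          - 3 * deriv lam s / lam s := by
      intro s hs
      have key := (H s hs).1
      rw [hlog1' s (hpos s hs), hlog2 s hs] at key
      have ha' := (hpos s hs).ne'
      have hb' := hne s hs
      field_simp at key ⊢
      linear_combination -key
    refine ⟨hfF t ht, ?_⟩
    have key2 := (H t ht).2
    rw [hlog1' t (hpos t ht), hlog2 t ht, hdf t ht hfF] at key2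
    field_simp at key2
    have h4 : (deriv (deriv (deriv lam)) t * deriv lam t * lam t ^ 2
          - lam t * deriv (deriv lam) t *
              ((deriv lam t) ^ 2 + lam t * deriv (deriv lam) t)
          + A * lam t ^ 2 * (2 * (deriv lam t) ^ 2 - lam t * deriv (deriv lam) t)
          + K * lam t ^ 4 * (3 * (deriv lam t) ^ 2 - lam t * deriv (deriv lam) t)
          - (deriv lam t) ^ 4) * lam t ^ 4 = 0 := by linear_combination lam t ^ 4 * key2
    exact (mul_eq_zero.mp h4).resolve_right (pow_ne_zero _ ha)
  · intro H t ht
    have ha := (hpos t ht).ne'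
    have hb := hne t ht
    have hfF : ∀ s ∈ I, f s = (deriv (deriv lam) s + A * lam s + K * lam s ^ 3) / deriv lam s
          - 3 * deriv lam s / lam s := fun s hs => (H s hs).1
    have ode := (H t ht).2
    constructor
    · rw [hlog1' t (hpos t ht), hlog2 t ht, hfF t ht]
      field_simp
      ring
    · rw [hlog1' t (hpos t ht), hlog2 t ht, hdf t ht hfF]
      field_simp
      linear_combination ode
end
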